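/- Let F : partitions of a finite agent set → partitions, be a process that at each step either (a) solves a group to optimality with respect to the other groups' fixed actions, or (b) merges groups upon discovering a cross-group conflict. Since merges strictly decrease the number of blocks and case (a) cannot occur infinitely often without reaching a state where every group is solved optimally and no cross-group conflicts exist, the process terminates; at termination, the combined solution is globally optimal. -/
import Mathlib


open Classical in
/-- The group solve/merge process of Anytime PIBT terminates and its terminal joint
action is globally optimal. States are a partition of the agents together with a joint
action; each step either merges blocks (strictly decreasing the block count) or keeps
the partition and strictly decreases the number of non-block-optimal blocks (a solve
step producing a block-optimal sub-solution). Block costs depend only on the actions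
of that block's agents, total cost is the sum of block costs, and whenever some block
is not block-optimal a step is available. Then (1) there is no infinite run, and
(2) every terminal state minimizes the total cost over all joint actions. -/
theorem stmt_14 {ι : Type} [Fintype ι] [DecidableEq ι]
    (A : ι → Type) [∀ i, Nonempty (A i)]
    (f : Finset ι → (∀ i, A i) → ℝ)
    (hdep : ∀ (b : Finset ι) (a a' : ∀ i, A i), (∀ i ∈ b, a i = a' i) → f b a = f b a')
    (BlockOpt : Finpartition (Finset.univ : Finset ι) → (∀ i, A i) → Finset ι → Prop)
    (hBlockOpt : ∀ P a b, BlockOpt P a b ↔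
      ∀ a' : ∀ i, A i, (∀ i ∉ b, a' i = a i) → f b a ≤ f b a')
    (step : (Finpartition (Finset.univ : Finset ι) × (∀ i, A i)) →
            (Finpartition (Finset.univ : Finset ι) × (∀ i, A i)) → Prop)
    (hstep : ∀ s s', step s s' →
      (s'.1.parts.card < s.1.parts.card) ∨
      (s'.1 = s.1 ∧
        (s'.1.parts.filter (fun b => ¬ BlockOpt s'.1 s'.2 b)).card <
          (s.1.parts.filter (fun b => ¬ BlockOpt s.1 s.2 b)).card))
    (hprogress : ∀ s, (∃ b ∈ s.1.parts, ¬ BlockOpt s.1 s.2 b) → ∃ s', step s s') :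
    (∀ seq : ℕ → (Finpartition (Finset.univ : Finset ι) × (∀ i, A i)),
        ¬ ∀ t, step (seq t) (seq (t + 1))) ∧
    (∀ s, (¬ ∃ s', step s s') →
        ∀ a' : ∀ i, A i,
          ∑ b ∈ s.1.parts, f b s.2 ≤ ∑ b ∈ s.1.parts, f b a') := by

  classical
  constructor
  · intro seq hall
    set m : (Finpartition (Finset.univ : Finset ι) × (∀ i, A i)) → ℕ :=
      fun s => (Fintype.card ι + 1) * s.1.parts.card +
        (s.1.parts.filter (fun b => ¬ BlockOpt s.1 s.2 b)).card with hm
    have hdec : ∀ t, m (seq (t+1)) < m (seq t) := by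
      intro t
      rcases hstep _ _ (hall t) with h | ⟨hP, hr⟩
      · have hr' : ((seq (t+1)).1.parts.filter
            (fun b => ¬ BlockOpt (seq (t+1)).1 (seq (t+1)).2 b)).card ≤
            (seq (t+1)).1.parts.card := Finset.card_filter_le _ _
        have hb : (seq (t+1)).1.parts.card ≤ Fintype.card ι := by
          calc (seq (t+1)).1.parts.card ≤ (Finset.univ : Finset ι).card :=
                (seq (t+1)).1.card_parts_le_card
            _ = Fintype.card ι := Finset.card_univ
        simp only [hm]
        set N := Fintype.card ι
        set c := (seq t).1.parts.card
        set c' := (seq (t+1)).1.parts.card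
        nlinarith [hr', hb, h]
      · simp only [hm, hP]
        have : ((seq (t+1)).1.parts.filter
            (fun b => ¬ BlockOpt (seq (t+1)).1 (seq (t+1)).2 b)).card <
            ((seq t).1.parts.filter (fun b => ¬ BlockOpt (seq t).1 (seq t).2 b)).card := hr
        rw [hP] at this
        omega
    have key : ∀ t, m (seq t) + t ≤ m (seq 0) := by
      intro t
      induction t with
      | zero => simp
      | succ n ih => have := hdec n; omega
    have := key (m (seq 0) + 1)
    omega
  · intro s hterm a'
    have hopt : ∀ b ∈ s.1.parts, BlockOpt s.1 s.2 b := by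
      by_contra h
      push_neg at h
      obtain ⟨b, hb, hnb⟩ := h
      exact hterm (hprogress s ⟨b, hb, hnb⟩)
    refine Finset.sum_le_sum fun b hb => ?_
    have hopt' := (hBlockOpt s.1 s.2 b).mp (hopt b hb)
    set a'' : ∀ i, A i := fun i => if i ∈ b then a' i else s.2 i with ha
    have h1 : f b s.2 ≤ f b a'' := hopt' a'' (fun i hi => by simp [ha, hi])
    have h2 : f b a'' = f b a' := hdep b a'' a' (fun i hi => by simp [ha, hi])
    linarith
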